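/- There exists a constant C > 0 such that for all sufficiently large x, the number of integers n with 1 ≤ n ≤ x whose largest prime factor satisfies P(n) > x^{1/log₄ x} and whose second-largest prime factor satisfies P₂(n) ≤ x^{1/log₃ x} is at most C · x (log₄ x)/(log₃ x). -/

import Mathlib

open Classical Finset

/-- Sum of the divisors of `n` (with `σ(0) = 0`). -/
def sigmaFn (n : ℕ) : ℕ := ∑ d ∈ n.divisors, d

/-- Sum of the proper divisors of `n`. -/
def s (n : ℕ) : ℕ := sigmaFn n - n

/-- The number of distinct prime factors, with `ω(0) = ω(1) = 0`. -/
def omegaFn (n : ℕ) : ℕ := n.primeFactors.card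

/-- The number of prime factors counted with multiplicity, `Ω(0) = Ω(1) = 0`. -/
def bigOmegaFn (n : ℕ) : ℕ := n.primeFactorsList.length

/-- `log₁ x = max 1 (log x)`. -/
noncomputable def log1 (x : ℝ) : ℝ := max 1 (Real.log x)
noncomputable def log2 (x : ℝ) : ℝ := log1 (log1 x)
noncomputable def log3 (x : ℝ) : ℝ := log1 (log2 x)
noncomputable def log4 (x : ℝ) : ℝ := log1 (log3 x)

/-- The largest prime factor of `n`, with `P(1) = 1`. -/
def P (n : ℕ) : ℕ := max 1 (n.primeFactors.sup id)

/-- The second-largest prime factor of `n` (with multiplicity), `P₂(1) = 1`,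
`P₂(p) = 1` for `p` prime. -/
def P2 (n : ℕ) : ℕ := P (n / P n)

/-- The conjunction of conditions A–F; `n ∈ E(x)` iff one of them fails. -/
def EProp (x : ℝ) (n : ℕ) : Prop :=
  (P n : ℝ) > x ^ (1 / log3 x) ∧
  ¬ (P n) ^ 2 ∣ n ∧
  (P2 n : ℝ) > x ^ (1 / log3 x) ∧
  (P2 n : ℝ) < x * (P n : ℝ) / (2 * (n : ℝ)) ∧
  ¬ (P2 n) ^ 2 ∣ n ∧
  ∀ q : ℕ, q.Prime → q ∣ Nat.gcd (n / P n) (sigmaFn (n / P n)) → (q : ℝ) < log2 x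

/-- The exceptional set `E(x)`. -/
noncomputable def E (x : ℝ) : Finset ℕ :=
  (Finset.Icc 1 ⌊x⌋₊).filter fun n => ¬ EProp x n

/-- θ(n) ≤ n log 4 -/
lemma theta_le (n : ℕ) : ∑ p ∈ Nat.primesBelow (n+1), Real.log p ≤ n * Real.log 4 := by
  have h1 : ∑ p ∈ Nat.primesBelow (n+1), Real.log p = Real.log (primorial n) := by
    rw [primorial]
    push_cast
    rw [Real.log_prod]
    · rfl
    · intro p hp
      exact_mod_cast (Nat.prime_of_mem_primesBelow hp).pos.ne'
  rw [h1]
  calc Real.log (primorial n) ≤ Real.log ((4:ℕ)^n) := by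
        apply Real.log_le_log (by exact_mod_cast primorial_pos n)
        exact_mod_cast primorial_le_4_pow n
    _ = n * Real.log 4 := by push_cast; rw [Real.log_pow]

/-- Chebyshev: π(n) ≤ (2 log 4 + 4) n / log n for n ≥ 2. -/
lemma pi_le (n : ℕ) (hn : 2 ≤ n) :
    ((Nat.primesBelow (n+1)).card : ℝ) ≤ (2 * Real.log 4 + 4) * n / Real.log n := by
  have hn0 : (0:ℝ) < n := by positivity
  have hn1 : (1:ℝ) < n := by exact_mod_cast hn
  have hlogn : 0 < Real.log n := Real.log_pos hn1
  set s := Nat.sqrt n with hs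
  have hcard : (Nat.primesBelow (n+1)).card ≤
      ((Nat.primesBelow (n+1)).filter (· ≤ s)).card +
      ((Nat.primesBelow (n+1)).filter (s < ·)).card := by
    have := Finset.card_filter_add_card_filter_not (s := Nat.primesBelow (n+1))
      (p := (· ≤ s))
    have h2 : ((Nat.primesBelow (n+1)).filter (fun p => ¬ (p ≤ s))).card
        = ((Nat.primesBelow (n+1)).filter (s < ·)).card := by
      congr 1
      apply Finset.filter_congr
      intro p _
      simp [not_le]
    omega
  -- small primes: card ≤ s + 1
  have hsmall : ((Nat.primesBelow (n+1)).filter (· ≤ s)).card ≤ s + 1 := by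
    calc ((Nat.primesBelow (n+1)).filter (· ≤ s)).card
        ≤ (Finset.range (s+1)).card := by
          apply Finset.card_le_card
          intro p hp
          simp only [Finset.mem_filter] at hp
          simp [Nat.lt_succ_iff, hp.2]
      _ = s + 1 := by simp
  -- big primes
  have hbig : (((Nat.primesBelow (n+1)).filter (s < ·)).card : ℝ) * (Real.log n / 2)
      ≤ n * Real.log 4 := by
    have h2 : ∀ p ∈ (Nat.primesBelow (n+1)).filter (s < ·), Real.log n / 2 ≤ Real.log p := by
      intro p hp
      simp only [Finset.mem_filter] at hp
      have hp2 : n < (s+1)*(s+1) := Nat.lt_succ_sqrt n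
      have hps : s + 1 ≤ p := hp.2
      have hle : (n:ℝ) ≤ (p:ℝ) * p := by
        have : n < p * p := lt_of_lt_of_le hp2 (Nat.mul_le_mul hps hps)
        exact_mod_cast this.le
      have hppos : (0:ℝ) < p := by
        exact_mod_cast (Nat.prime_of_mem_primesBelow hp.1).pos
      have := Real.log_le_log hn0 hle
      rw [Real.log_mul hppos.ne' hppos.ne'] at this
      linarith
    calc (((Nat.primesBelow (n+1)).filter (s < ·)).card : ℝ) * (Real.log n / 2)
        = ∑ _p ∈ (Nat.primesBelow (n+1)).filter (s < ·), (Real.log n / 2) := by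
          rw [Finset.sum_const, nsmul_eq_mul]
      _ ≤ ∑ p ∈ (Nat.primesBelow (n+1)).filter (s < ·), Real.log p := Finset.sum_le_sum h2
      _ ≤ ∑ p ∈ Nat.primesBelow (n+1), Real.log p := by
          apply Finset.sum_le_sum_of_subset_of_nonneg (Finset.filter_subset _ _)
          intro p hp _
          exact Real.log_natCast_nonneg p
      _ ≤ n * Real.log 4 := theta_le n
  have hbig' : (((Nat.primesBelow (n+1)).filter (s < ·)).card : ℝ)
      ≤ 2 * Real.log 4 * n / Real.log n := by
    rw [le_div_iff₀ hlogn]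
    nlinarith [hbig, hn0.le]
  -- s + 1 ≤ 4n / log n
  have hsq : (s:ℝ) ≤ Real.sqrt n := by
    apply Real.le_sqrt_of_sq_le
    have : s ^ 2 ≤ n := Nat.sqrt_le' n
    exact_mod_cast this
  have hlogsqrt : Real.log n ≤ 2 * Real.sqrt n := by
    have h := Real.log_le_sub_one_of_pos (x := Real.sqrt n) (Real.sqrt_pos.2 hn0)
    rw [Real.log_sqrt hn0.le] at h
    nlinarith [Real.sqrt_nonneg (n:ℝ)]
  have hsmall' : ((s:ℝ) + 1) ≤ 4 * n / Real.log n := by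
    rw [le_div_iff₀ hlogn]
    have h1 : (1:ℝ) ≤ Real.sqrt n := by
      apply Real.le_sqrt_of_sq_le
      norm_num
      exact_mod_cast hn.trans' (by norm_num)
    have hsn : Real.sqrt n * Real.sqrt n = (n:ℝ) := Real.mul_self_sqrt hn0.le
    nlinarith [hsq, hlogsqrt, hlogn]
  have hc1 : (((Nat.primesBelow (n+1)).filter (· ≤ s)).card : ℝ) ≤ (s:ℝ) + 1 := by
    exact_mod_cast hsmall
  have hc0 : ((Nat.primesBelow (n+1)).card : ℝ) ≤
      (((Nat.primesBelow (n+1)).filter (· ≤ s)).card : ℝ) +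
      (((Nat.primesBelow (n+1)).filter (s < ·)).card : ℝ) := by exact_mod_cast hcard
  calc ((Nat.primesBelow (n+1)).card : ℝ)
      ≤ 4 * n / Real.log n + 2 * Real.log 4 * n / Real.log n := by linarith
    _ = (2 * Real.log 4 + 4) * n / Real.log n := by ring

lemma log_eq_sum_factorization (N : ℕ) (hN : N ≠ 0) :
    Real.log N = ∑ p ∈ N.primeFactors, ((N.factorization p : ℝ) * Real.log p) := by
  have h : ∏ p ∈ N.primeFactors, p ^ N.factorization p = N := by
    rw [← Nat.support_factorization]
    exact Nat.factorization_prod_pow_eq_self hN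
  conv_lhs => rw [← h]
  push_cast
  rw [Real.log_prod]
  · apply Finset.sum_congr rfl
    intro p hp
    rw [Real.log_pow]
  · intro p hp
    have := (Nat.prime_of_mem_primeFactors hp).pos
    positivity

lemma nu_ge (n p : ℕ) (hp : p.Prime) : p ^ (n / p) ∣ Nat.factorial n := by
  rcases Nat.eq_zero_or_pos (n / p) with h | h
  · simp [h]
  · have hpn : p ≤ n := by
      by_contra hc
      push_neg at hc
      rw [Nat.div_eq_of_lt hc] at h
      omega
    have hlog : 0 < Nat.log p n := Nat.log_pos hp.one_lt hpn
    rw [Nat.Prime.pow_dvd_factorial_iff hp (Nat.lt_succ_self _)]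
    have h1 : 1 ∈ Finset.Ico 1 (Nat.log p n + 1) := by
      rw [Finset.mem_Ico]; omega
    have := Finset.single_le_sum (f := fun i => n / p ^ i)
      (fun i _ => Nat.zero_le _) h1
    simpa using this

lemma sum_floor_log_le (n : ℕ) :
    ∑ p ∈ Nat.primesBelow (n+1), ((n / p : ℕ) : ℝ) * Real.log p ≤ Real.log (Nat.factorial n) := by
  have hf : (Nat.factorial n) ≠ 0 := Nat.factorial_ne_zero n
  rw [log_eq_sum_factorization _ hf]
  have hsub : Nat.primesBelow (n+1) ⊆ (Nat.factorial n).primeFactors := by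
    intro p hp
    have hp' := Nat.prime_of_mem_primesBelow hp
    have hle := Nat.lt_of_mem_primesBelow hp
    rw [Nat.mem_primeFactors]
    exact ⟨hp', (Nat.Prime.dvd_factorial hp').2 (by omega), hf⟩
  calc ∑ p ∈ Nat.primesBelow (n+1), ((n / p : ℕ) : ℝ) * Real.log p
      ≤ ∑ p ∈ Nat.primesBelow (n+1), ((Nat.factorial n).factorization p : ℝ) * Real.log p := by
        apply Finset.sum_le_sum
        intro p hp
        have hp' := Nat.prime_of_mem_primesBelow hp
        have hnu : n / p ≤ (Nat.factorial n).factorization p :=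
          (Nat.Prime.pow_dvd_iff_le_factorization hp' hf).1 (nu_ge n p hp')
        have : ((n / p : ℕ) : ℝ) ≤ ((Nat.factorial n).factorization p : ℝ) := by exact_mod_cast hnu
        exact mul_le_mul_of_nonneg_right this (Real.log_natCast_nonneg p)
    _ ≤ ∑ p ∈ (Nat.factorial n).primeFactors, ((Nat.factorial n).factorization p : ℝ) * Real.log p := by
        apply Finset.sum_le_sum_of_subset_of_nonneg hsub
        intro p hp _
        have := Real.log_natCast_nonneg p
        positivity

lemma mertens1 (n : ℕ) (hn : 1 ≤ n) :
    ∑ p ∈ Nat.primesBelow (n+1), Real.log p / p ≤ Real.log n + Real.log 4 := by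
  have hn0 : (0:ℝ) < n := by exact_mod_cast hn
  have key : (n:ℝ) * ∑ p ∈ Nat.primesBelow (n+1), Real.log p / p
      ≤ (n:ℝ) * Real.log n + n * Real.log 4 := by
    rw [Finset.mul_sum]
    have hterm : ∀ p ∈ Nat.primesBelow (n+1),
        (n:ℝ) * (Real.log p / p) ≤ (((n / p : ℕ) : ℝ) + 1) * Real.log p := by
      intro p hp
      have hp' := Nat.prime_of_mem_primesBelow hp
      have hppos : (0:ℝ) < p := by exact_mod_cast hp'.pos
      have hdiv : (n:ℝ) / p ≤ ((n / p : ℕ) : ℝ) + 1 := by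
        have hdm := Nat.div_add_mod n p
        have hml := Nat.mod_lt n hp'.pos
        have h : n < (n / p + 1) * p := by
          have hring : (n / p + 1) * p = p * (n / p) + p := by ring
          omega
        have h' : (n:ℝ) < (((n / p : ℕ) : ℝ) + 1) * p := by exact_mod_cast h
        rw [div_le_iff₀ hppos]
        linarith
      have : (n:ℝ) * (Real.log p / p) = ((n:ℝ) / p) * Real.log p := by ring
      rw [this]
      exact mul_le_mul_of_nonneg_right hdiv (Real.log_natCast_nonneg p)
    calc ∑ p ∈ Nat.primesBelow (n+1), (n:ℝ) * (Real.log p / p)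
        ≤ ∑ p ∈ Nat.primesBelow (n+1), (((n / p : ℕ) : ℝ) + 1) * Real.log p :=
          Finset.sum_le_sum hterm
      _ = (∑ p ∈ Nat.primesBelow (n+1), ((n / p : ℕ) : ℝ) * Real.log p)
          + ∑ p ∈ Nat.primesBelow (n+1), Real.log p := by
          rw [← Finset.sum_add_distrib]
          apply Finset.sum_congr rfl
          intro p _
          ring
      _ ≤ Real.log (Nat.factorial n) + (n:ℝ) * Real.log 4 := by
          have h1 := sum_floor_log_le n
          have h2 := theta_le n
          linarith
      _ ≤ (n:ℝ) * Real.log n + n * Real.log 4 := by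
          have h1 : (Nat.factorial n : ℕ) ≤ n ^ n := Nat.factorial_le_pow n
          have h2 : Real.log (Nat.factorial n) ≤ Real.log (((n ^ n : ℕ) : ℝ)) := by
            apply Real.log_le_log
            · exact_mod_cast Nat.factorial_pos n
            · exact_mod_cast h1
          have h3 : Real.log (((n ^ n : ℕ) : ℝ)) = (n:ℝ) * Real.log n := by
            push_cast
            rw [Real.log_pow]
          rw [h3] at h2
          linarith
  calc ∑ p ∈ Nat.primesBelow (n+1), Real.log p / p
      = ((n:ℝ) * ∑ p ∈ Nat.primesBelow (n+1), Real.log p / p) / n := by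
        field_simp
    _ ≤ ((n:ℝ) * Real.log n + n * Real.log 4) / n := by
        apply div_le_div_of_nonneg_right key hn0.le |>.trans_eq rfl
        
    _ = Real.log n + Real.log 4 := by field_simp

lemma abel_eq (a w : ℕ → ℝ) (K : ℕ) :
    ∑ k ∈ Icc 1 (K+1), (a (k+1) - a k) * w k
    = a (K+2) * w (K+1) - a 1 * w 1 + ∑ k ∈ Icc 1 K, a (k+1) * (w k - w (k+1)) := by
  induction K with
  | zero => simp; ring
  | succ K ih =>
    rw [Finset.sum_Icc_succ_top (by omega : 1 ≤ K+1+1), ih,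
        Finset.sum_Icc_succ_top (by omega : 1 ≤ K+1)]
    ring

lemma telescope_le (K : ℕ) : ∑ k ∈ Icc 1 K, ((k:ℝ)⁻¹ - ((k:ℝ)+1)⁻¹) ≤ 1 := by
  have h : ∀ K : ℕ, ∑ k ∈ Icc 1 K, ((k:ℝ)⁻¹ - ((k:ℝ)+1)⁻¹) = 1 - ((K:ℝ)+1)⁻¹ := by
    intro K
    induction K with
    | zero => simp
    | succ K ih =>
      rw [Finset.sum_Icc_succ_top (by omega : 1 ≤ K+1), ih]
      push_cast
      have h1 : ((K:ℝ)+1) ≠ 0 := by positivity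
      have h2 : ((K:ℝ)+1+1) ≠ 0 := by positivity
      field_simp
      ring
  rw [h]
  have : (0:ℝ) < ((K:ℝ)+1)⁻¹ := by positivity
  linarith

lemma harmonic_Icc (K : ℕ) : ∑ k ∈ Icc 1 K, (k:ℝ)⁻¹ ≤ 1 + Real.log K := by
  have h1 := harmonic_le_one_add_log K
  rw [harmonic_eq_sum_Icc] at h1
  have h2 : ((∑ i ∈ Icc 1 K, (i:ℚ)⁻¹ : ℚ) : ℝ) = ∑ k ∈ Icc 1 K, (k:ℝ)⁻¹ := by
    push_cast
    rfl
  rw [← h2]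
  exact_mod_cast h1

lemma log_four : Real.log 4 = 2 * Real.log 2 := by
  rw [show (4:ℝ) = 2^2 by norm_num, Real.log_pow]
  push_cast; ring

/-- Mertens' second theorem, upper bound. -/
lemma mertens2 (N : ℕ) (hN : 2 ≤ N) :
    ∑ p ∈ Nat.primesBelow (N+1), (1 / p : ℝ) ≤ Real.log (Real.log N / Real.log 2) + 8 := by
  have hlog2 : (0:ℝ) < Real.log 2 := Real.log_pos (by norm_num)
  set K := Nat.log 2 N with hKdef
  have hK1 : 1 ≤ K := Nat.log_pos (by norm_num) hN
  have hNK : N < 2^(K+1) := Nat.lt_pow_succ_log_self (by norm_num) N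
  set a : ℕ → ℝ := fun k => ∑ p ∈ Nat.primesBelow (2^k+1), Real.log p / p with ha
  set w : ℕ → ℝ := fun k => ((k:ℝ) * Real.log 2)⁻¹ with hw
  have ha_nonneg : ∀ k, 0 ≤ a k := by
    intro k
    apply Finset.sum_nonneg
    intro p hp
    have h0 := (Nat.prime_of_mem_primesBelow hp).pos
    have : (0:ℝ) ≤ Real.log p := Real.log_natCast_nonneg p
    positivity
  have ha_le : ∀ k, a k ≤ (k:ℝ) * Real.log 2 + Real.log 4 := by
    intro k
    have h := mertens1 (2^k) (Nat.one_le_pow _ _ (by norm_num))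
    have h2 : Real.log ((2^k : ℕ) : ℝ) = (k:ℝ) * Real.log 2 := by
      push_cast
      rw [Real.log_pow]
    rw [h2] at h
    exact h
  -- block decomposition
  have claim1 : ∀ j : ℕ, ∑ p ∈ Nat.primesBelow (2^(j+1)+1), (1/p:ℝ)
      ≤ 2⁻¹ + ∑ k ∈ Icc 1 j, (a (k+1) - a k) * w k := by
    intro j
    induction j with
    | zero =>
      have h2 : Nat.primesBelow (2^1+1) = {2} := by decide
      rw [h2]
      simp
    | succ j ih =>
      have hsub : Nat.primesBelow (2^(j+1)+1) ⊆ Nat.primesBelow (2^(j+2)+1) := by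
        apply Finset.filter_subset_filter
        apply Finset.range_subset_range.2
        have : (2:ℕ)^(j+1) ≤ 2^(j+2) := Nat.pow_le_pow_right (by norm_num) (by omega)
        omega
      have hsdiff := Finset.sum_sdiff (f := fun p : ℕ => (1/(p:ℝ))) hsub
      have hblock : ∑ p ∈ Nat.primesBelow (2^(j+2)+1) \ Nat.primesBelow (2^(j+1)+1), (1/p:ℝ)
          ≤ (a (j+2) - a (j+1)) * w (j+1) := by
        have hwpos : (0:ℝ) < ((j:ℝ)+1) * Real.log 2 := by positivity
        have hterm : ∀ p ∈ Nat.primesBelow (2^(j+2)+1) \ Nat.primesBelow (2^(j+1)+1),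
            (1/p:ℝ) ≤ (Real.log p / p) * w (j+1) := by
          intro p hp
          rw [Finset.mem_sdiff] at hp
          have hp' := Nat.prime_of_mem_primesBelow hp.1
          have hpgt : 2^(j+1) < p := by
            by_contra hc
            push_neg at hc
            exact hp.2 (by
              rw [Nat.mem_primesBelow]
              exact ⟨by omega, hp'⟩)
          have hppos : (0:ℝ) < p := by exact_mod_cast hp'.pos
          have hlogp : ((j:ℝ)+1) * Real.log 2 ≤ Real.log p := by
            have h2p : ((2:ℝ))^(j+1) ≤ (p:ℝ) := by exact_mod_cast hpgt.le
            calc ((j:ℝ)+1) * Real.log 2 = Real.log ((2:ℝ)^(j+1)) := by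
                  rw [Real.log_pow]; push_cast; ring
              _ ≤ Real.log p := Real.log_le_log (by positivity) h2p
          have h1 : (1:ℝ) ≤ Real.log p * w (j+1) := by
            simp only [hw]
            push_cast
            rw [← div_eq_mul_inv, le_div_iff₀ hwpos]
            linarith
          have h2 := mul_le_mul_of_nonneg_right h1
            (le_of_lt (by positivity : (0:ℝ) < 1/(p:ℝ)))
          calc (1:ℝ)/(p:ℝ) = 1 * (1/(p:ℝ)) := by ring
            _ ≤ (Real.log p * w (j+1)) * (1/(p:ℝ)) := h2
            _ = (Real.log p / (p:ℝ)) * w (j+1) := by ring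
        calc ∑ p ∈ Nat.primesBelow (2^(j+2)+1) \ Nat.primesBelow (2^(j+1)+1), (1/p:ℝ)
            ≤ ∑ p ∈ Nat.primesBelow (2^(j+2)+1) \ Nat.primesBelow (2^(j+1)+1),
                (Real.log p / p) * w (j+1) := Finset.sum_le_sum hterm
          _ = (∑ p ∈ Nat.primesBelow (2^(j+2)+1) \ Nat.primesBelow (2^(j+1)+1),
                Real.log p / p) * w (j+1) := by rw [Finset.sum_mul]
          _ = (a (j+2) - a (j+1)) * w (j+1) := by
              rw [Finset.sum_sdiff_eq_sub hsub]
      calc ∑ p ∈ Nat.primesBelow (2^(j+1+1)+1), (1/p:ℝ)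
          = (∑ p ∈ Nat.primesBelow (2^(j+2)+1) \ Nat.primesBelow (2^(j+1)+1), (1/p:ℝ))
            + ∑ p ∈ Nat.primesBelow (2^(j+1)+1), (1/p:ℝ) := by rw [hsdiff]
        _ ≤ (a (j+2) - a (j+1)) * w (j+1) + (2⁻¹ + ∑ k ∈ Icc 1 j, (a (k+1) - a k) * w k) := by
            linarith [hblock, ih]
        _ = 2⁻¹ + ∑ k ∈ Icc 1 (j+1), (a (k+1) - a k) * w k := by
            rw [Finset.sum_Icc_succ_top (by omega : 1 ≤ j+1)]
            ring
  -- Abel bound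
  obtain ⟨K', hK'⟩ : ∃ K', K = K' + 1 := ⟨K - 1, by omega⟩
  have habel := abel_eq a w K'
  have hb1 : a (K'+2) * w (K'+1) ≤ 4 := by
    have hwpos : (0:ℝ) < ((K':ℝ)+1) * Real.log 2 := by positivity
    have hupper : a (K'+2) ≤ ((K':ℝ)+4) * Real.log 2 := by
      have h := ha_le (K'+2)
      rw [log_four] at h
      push_cast at h
      linarith
    have hwval : w (K'+1) = (((K':ℝ)+1) * Real.log 2)⁻¹ := by
      simp only [hw]; push_cast; ring_nf
    rw [hwval]
    calc a (K'+2) * (((K':ℝ)+1) * Real.log 2)⁻¹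
        ≤ (((K':ℝ)+4) * Real.log 2) * (((K':ℝ)+1) * Real.log 2)⁻¹ := by
          apply mul_le_mul_of_nonneg_right hupper
          positivity
      _ ≤ 4 := by
          rw [← div_eq_mul_inv, div_le_iff₀ hwpos]
          have : (0:ℝ) ≤ (K':ℝ) := Nat.cast_nonneg K'
          nlinarith
  have hb2 : ∑ k ∈ Icc 1 K', a (k+1) * (w k - w (k+1))
      ≤ (1 + Real.log K') + 2 := by
    have hterm : ∀ k ∈ Icc 1 K', a (k+1) * (w k - w (k+1))
        ≤ (k:ℝ)⁻¹ + 2 * ((k:ℝ)⁻¹ - ((k:ℝ)+1)⁻¹) := by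
      intro k hk
      rw [Finset.mem_Icc] at hk
      have hk1 : (1:ℝ) ≤ (k:ℝ) := by exact_mod_cast hk.1
      have hkpos : (0:ℝ) < (k:ℝ) := by linarith
      have hwdiff : w k - w (k+1) = ((k:ℝ) * ((k:ℝ)+1) * Real.log 2)⁻¹ := by
        simp only [hw]
        push_cast
        rw [mul_inv, mul_inv, mul_inv]
        field_simp
        ring
      have hwdnn : (0:ℝ) ≤ ((k:ℝ) * ((k:ℝ)+1) * Real.log 2)⁻¹ := by positivity
      have hupper : a (k+1) ≤ ((k:ℝ)+3) * Real.log 2 := by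
        have h := ha_le (k+1)
        rw [log_four] at h
        push_cast at h
        linarith
      rw [hwdiff]
      calc a (k+1) * ((k:ℝ) * ((k:ℝ)+1) * Real.log 2)⁻¹
          ≤ (((k:ℝ)+3) * Real.log 2) * ((k:ℝ) * ((k:ℝ)+1) * Real.log 2)⁻¹ :=
            mul_le_mul_of_nonneg_right hupper hwdnn
        _ = (k:ℝ)⁻¹ + 2 * ((k:ℝ)⁻¹ - ((k:ℝ)+1)⁻¹) := by
            have h1 : (k:ℝ) ≠ 0 := hkpos.ne'
            have h2 : ((k:ℝ)+1) ≠ 0 := by positivity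
            field_simp
            ring
    calc ∑ k ∈ Icc 1 K', a (k+1) * (w k - w (k+1))
        ≤ ∑ k ∈ Icc 1 K', ((k:ℝ)⁻¹ + 2 * ((k:ℝ)⁻¹ - ((k:ℝ)+1)⁻¹)) :=
          Finset.sum_le_sum hterm
      _ = (∑ k ∈ Icc 1 K', (k:ℝ)⁻¹) + 2 * ∑ k ∈ Icc 1 K', ((k:ℝ)⁻¹ - ((k:ℝ)+1)⁻¹) := by
          rw [Finset.sum_add_distrib, Finset.mul_sum]
      _ ≤ (1 + Real.log K') + 2 * 1 := by
          have := harmonic_Icc K'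
          have := telescope_le K'
          linarith
      _ = (1 + Real.log K') + 2 := by ring
  -- putting it together
  have hsubN : Nat.primesBelow (N+1) ⊆ Nat.primesBelow (2^(K+1)+1) := by
    apply Finset.filter_subset_filter
    apply Finset.range_subset_range.2
    omega
  have hmain : ∑ p ∈ Nat.primesBelow (N+1), (1/p:ℝ)
      ≤ 2⁻¹ + ∑ k ∈ Icc 1 K, (a (k+1) - a k) * w k := by
    calc ∑ p ∈ Nat.primesBelow (N+1), (1/p:ℝ)
        ≤ ∑ p ∈ Nat.primesBelow (2^(K+1)+1), (1/p:ℝ) := by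
          apply Finset.sum_le_sum_of_subset_of_nonneg hsubN
          intro p hp _
          positivity
      _ ≤ 2⁻¹ + ∑ k ∈ Icc 1 K, (a (k+1) - a k) * w k := claim1 K
  have ha1w1 : 0 ≤ a 1 * w 1 := by
    apply mul_nonneg (ha_nonneg 1)
    simp only [hw]
    positivity
  have hlogK' : Real.log K' ≤ Real.log (Real.log N / Real.log 2) := by
    have hKle : (K:ℝ) ≤ Real.log N / Real.log 2 := by
      rw [le_div_iff₀ hlog2]
      have h2K : (2:ℕ)^K ≤ N := Nat.pow_log_le_self 2 (by omega)
      have : Real.log ((2^K : ℕ) : ℝ) ≤ Real.log N := by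
        apply Real.log_le_log (by positivity)
        exact_mod_cast h2K
      rw [show Real.log ((2^K : ℕ) : ℝ) = (K:ℝ) * Real.log 2 by push_cast; rw [Real.log_pow]] at this
      linarith
    rcases Nat.eq_zero_or_pos K' with h0 | hpos
    · rw [h0]
      simp
      have h1 : (1:ℝ) ≤ Real.log N / Real.log 2 := by
        calc (1:ℝ) ≤ (K:ℝ) := by exact_mod_cast hK1
          _ ≤ _ := hKle
      exact Real.log_nonneg h1
    · apply Real.log_le_log (by exact_mod_cast hpos)
      calc ((K':ℝ)) ≤ (K:ℝ) := by
            rw [hK']; push_cast; linarith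
        _ ≤ Real.log N / Real.log 2 := hKle
  rw [hK'] at hmain
  rw [habel] at hmain
  calc ∑ p ∈ Nat.primesBelow (N+1), (1/p:ℝ)
      ≤ 2⁻¹ + (a (K'+2) * w (K'+1) - a 1 * w 1 + ∑ k ∈ Icc 1 K', a (k+1) * (w k - w (k+1))) :=
        hmain
    _ ≤ 2⁻¹ + (4 - 0 + ((1 + Real.log K') + 2)) := by linarith [hb1, hb2, ha1w1]
    _ ≤ Real.log (Real.log N / Real.log 2) + 8 := by linarith [hlogK']

lemma geom_bound (q M : ℕ) (hq : 2 ≤ q) :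
    ∑ e ∈ Finset.range (M+1), ((1:ℝ)/q)^e ≤ (1 - 1/(q:ℝ))⁻¹ := by
  have hq1 : (1:ℝ) < q := by exact_mod_cast hq
  have hr0 : (0:ℝ) ≤ 1/(q:ℝ) := by positivity
  have hr1 : (1:ℝ)/(q:ℝ) < 1 := by
    rw [div_lt_one (by positivity)]; exact hq1
  calc ∑ e ∈ Finset.range (M+1), ((1:ℝ)/q)^e
      ≤ ∑' e : ℕ, ((1:ℝ)/q)^e := by
        apply Summable.sum_le_tsum
        · intro e _; positivity
        · exact summable_geometric_of_lt_one hr0 hr1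
    _ = (1 - 1/(q:ℝ))⁻¹ := tsum_geometric_of_lt_one hr0 hr1

lemma smooth_sum_le (M : ℕ) : ∀ S : Finset ℕ, (∀ p ∈ S, p.Prime) →
    ∑ m ∈ (Icc 1 M).filter (fun m => m.primeFactors ⊆ S), (1/(m:ℝ))
      ≤ ∏ p ∈ S, (1 - 1/(p:ℝ))⁻¹ := by
  intro S
  induction S using Finset.induction_on with
  | empty =>
    intro _
    have hsub : (Icc 1 M).filter (fun m => m.primeFactors ⊆ ∅) ⊆ {1} := by
      intro m hm
      simp only [Finset.mem_filter, Finset.mem_Icc, Finset.subset_empty] at hm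
      have h0 := Nat.primeFactors_eq_empty.1 hm.2
      simp only [Finset.mem_singleton]
      omega
    calc ∑ m ∈ (Icc 1 M).filter (fun m => m.primeFactors ⊆ ∅), (1/(m:ℝ))
        ≤ ∑ m ∈ ({1} : Finset ℕ), (1/(m:ℝ)) := by
          apply Finset.sum_le_sum_of_subset_of_nonneg hsub
          intro m _ _; positivity
      _ = 1 := by simp
      _ = ∏ p ∈ (∅ : Finset ℕ), (1 - 1/(p:ℝ))⁻¹ := by simp
  | @insert q S hqS ih =>
    intro hprime
    have hq : q.Prime := hprime q (Finset.mem_insert_self q S)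
    have hS' : ∀ p ∈ S, p.Prime := fun p hp => hprime p (Finset.mem_insert_of_mem hp)
    have hq2 : 2 ≤ q := hq.two_le
    have hq0 : (0:ℝ) < q := by exact_mod_cast hq.pos
    set T := (Icc 1 M).filter (fun m => m.primeFactors ⊆ insert q S) with hT
    set T' := (Icc 1 M).filter (fun m => m.primeFactors ⊆ S) with hT'
    have hmem : ∀ m ∈ T, 1 ≤ m ∧ m ≤ M ∧ m.primeFactors ⊆ insert q S := by
      intro m hm
      simp only [hT, Finset.mem_filter, Finset.mem_Icc] at hm
      exact ⟨hm.1.1, hm.1.2, hm.2⟩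
    have hrec : ∀ m ∈ T, q ^ m.factorization q * (m / q ^ m.factorization q) = m := by
      intro m _
      exact Nat.ordProj_mul_ordCompl_eq_self m q
    have hinj : ∀ m₁ ∈ T, ∀ m₂ ∈ T,
        ((fun m => (m.factorization q, m / q ^ m.factorization q) : ℕ → ℕ × ℕ)) m₁
        = ((fun m => (m.factorization q, m / q ^ m.factorization q) : ℕ → ℕ × ℕ)) m₂ → m₁ = m₂ := by
      intro m₁ h₁ m₂ h₂ heq
      have e1 := hrec m₁ h₁
      have e2 := hrec m₂ h₂
      simp only [Prod.mk.injEq] at heq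
      calc m₁ = q ^ m₁.factorization q * (m₁ / q ^ m₁.factorization q) := e1.symm
        _ = q ^ m₂.factorization q * (m₂ / q ^ m₂.factorization q) := by rw [heq.2, heq.1]
        _ = m₂ := e2
    have hval : ∀ m ∈ T,
        ((1:ℝ)/q)^(m.factorization q) * (1/((m / q ^ m.factorization q : ℕ):ℝ)) = 1/(m:ℝ) := by
      intro m hm
      obtain ⟨hm1, hmM, _⟩ := hmem m hm
      have hm0 : m ≠ 0 := by omega
      have e1 := hrec m hm
      have hmp : (0:ℝ) < ((m / q ^ m.factorization q : ℕ) : ℝ) := by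
        have := Nat.ordCompl_pos q hm0
        exact_mod_cast this
      have hcast : (m:ℝ) = (q:ℝ)^(m.factorization q) * ((m / q ^ m.factorization q : ℕ) : ℝ) := by
        calc (m:ℝ) = ((q ^ m.factorization q * (m / q ^ m.factorization q) : ℕ) : ℝ) := by
              rw [e1]
          _ = (q:ℝ)^(m.factorization q) * ((m / q ^ m.factorization q : ℕ) : ℝ) := by
              push_cast; ring
      rw [hcast, div_pow, one_pow]
      field_simp
    have himage : T.image ((fun m => (m.factorization q, m / q ^ m.factorization q) : ℕ → ℕ × ℕ))
        ⊆ (Finset.range (M+1)) ×ˢ T' := by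
      intro pr hpr
      rw [Finset.mem_image] at hpr
      obtain ⟨m, hm, hpr'⟩ := hpr
      obtain ⟨hm1, hmM, hfac⟩ := hmem m hm
      have hm0 : m ≠ 0 := by omega
      rw [← hpr', Finset.mem_product]
      constructor
      · show m.factorization q ∈ Finset.range (M+1)
        rw [Finset.mem_range]
        have hdvd : q ^ m.factorization q ∣ m := Nat.ordProj_dvd m q
        have hle : q ^ m.factorization q ≤ m := Nat.le_of_dvd (by omega) hdvd
        have h2e : 2 ^ m.factorization q ≤ q ^ m.factorization q :=
          Nat.pow_le_pow_left hq2 _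
        have := Nat.lt_two_pow_self (n := m.factorization q)
        omega
      · show (m / q ^ m.factorization q) ∈ T'
        have hdvd' : (m / q ^ m.factorization q) ∣ m := Nat.ordCompl_dvd m q
        have hpos' : 0 < m / q ^ m.factorization q := Nat.ordCompl_pos q hm0
        simp only [hT', Finset.mem_filter, Finset.mem_Icc]
        refine ⟨⟨hpos', (Nat.le_of_dvd (by omega) hdvd').trans hmM⟩, ?_⟩
        intro r hr
        have hr' := Nat.prime_of_mem_primeFactors hr
        have hrdvd := Nat.dvd_of_mem_primeFactors hr
        have hrm : r ∈ m.primeFactors := by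
          rw [Nat.mem_primeFactors]
          exact ⟨hr', hrdvd.trans hdvd', hm0⟩
        have hmem' := hfac hrm
        rw [Finset.mem_insert] at hmem'
        rcases hmem' with h | h
        · exfalso
          apply Nat.not_dvd_ordCompl hq hm0
          rw [h] at hrdvd
          exact hrdvd
        · exact h
    calc ∑ m ∈ T, (1/(m:ℝ))
        = ∑ pr ∈ T.image ((fun m => (m.factorization q, m / q ^ m.factorization q) : ℕ → ℕ × ℕ)),
            ((1:ℝ)/q)^pr.1 * (1/(pr.2:ℝ)) := by
          rw [Finset.sum_image hinj]
          exact (Finset.sum_congr rfl hval).symm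
      _ ≤ ∑ pr ∈ (Finset.range (M+1)) ×ˢ T', ((1:ℝ)/q)^pr.1 * (1/(pr.2:ℝ)) := by
          apply Finset.sum_le_sum_of_subset_of_nonneg himage
          intro pr _ _
          positivity
      _ = ∑ e ∈ Finset.range (M+1), ∑ m ∈ T', ((1:ℝ)/q)^e * (1/(m:ℝ)) :=
          Finset.sum_product _ _ _
      _ = (∑ e ∈ Finset.range (M+1), ((1:ℝ)/q)^e) * ∑ m ∈ T', (1/(m:ℝ)) := by
          rw [Finset.sum_mul]
          exact Finset.sum_congr rfl fun e _ => (Finset.mul_sum _ _ _).symm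
      _ ≤ (1 - 1/(q:ℝ))⁻¹ * ∏ p ∈ S, (1 - 1/(p:ℝ))⁻¹ := by
          apply mul_le_mul (geom_bound q M hq2) (ih hS')
          · apply Finset.sum_nonneg; intro m _; positivity
          · have hq1 : (1:ℝ) < (q:ℝ) := by exact_mod_cast hq.one_lt
            have hlt : 1/(q:ℝ) < 1 := by
              rw [div_lt_one (by linarith)]; exact hq1
            have h0 : (0:ℝ) < 1 - 1/(q:ℝ) := by linarith
            positivity
      _ = ∏ p ∈ insert q S, (1 - 1/(p:ℝ))⁻¹ := by
          rw [Finset.prod_insert hqS]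

lemma sum_inv_mul_pred_aux : ∀ B : ℕ,
    ∑ k ∈ Icc 2 (B+1), ((k:ℝ) * ((k:ℝ) - 1))⁻¹ ≤ 1 - ((B:ℝ)+1)⁻¹ := by
  intro B
  induction B with
  | zero => simp
  | succ B ih =>
    rw [Finset.sum_Icc_succ_top (by omega : 2 ≤ B+1+1)]
    push_cast
    have h1 : ((B:ℝ)+1) ≠ 0 := by positivity
    have h2 : ((B:ℝ)+2) ≠ 0 := by positivity
    have h4 : (((B:ℝ)+1+1) * (((B:ℝ)+1+1) - 1))⁻¹ = ((B:ℝ)+1)⁻¹ - ((B:ℝ)+2)⁻¹ := by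
      field_simp
      ring
    have h5 : (((B:ℝ)+1+1))⁻¹ = ((B:ℝ)+2)⁻¹ := by
      rw [show ((B:ℝ)+1+1) = (B:ℝ)+2 from by ring]
    rw [h4, h5]
    linarith

lemma sum_inv_mul_pred_le (S : Finset ℕ) (hS : ∀ p ∈ S, 2 ≤ p) :
    ∑ p ∈ S, ((p:ℝ) * ((p:ℝ) - 1))⁻¹ ≤ 1 := by
  set B := S.sup id with hB
  have hsub : S ⊆ Icc 2 (B+1) := by
    intro p hp
    rw [Finset.mem_Icc]
    exact ⟨hS p hp, (Finset.le_sup (f := id) hp).trans (by omega)⟩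
  calc ∑ p ∈ S, ((p:ℝ) * ((p:ℝ) - 1))⁻¹
      ≤ ∑ k ∈ Icc 2 (B+1), ((k:ℝ) * ((k:ℝ) - 1))⁻¹ := by
        apply Finset.sum_le_sum_of_subset_of_nonneg hsub
        intro k hk _
        rw [Finset.mem_Icc] at hk
        have : (2:ℝ) ≤ (k:ℝ) := by exact_mod_cast hk.1
        have h1 : (0:ℝ) < (k:ℝ) := by linarith
        have h2 : (0:ℝ) < (k:ℝ) - 1 := by linarith
        positivity
    _ ≤ 1 - ((B:ℝ)+1)⁻¹ := sum_inv_mul_pred_aux B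
    _ ≤ 1 := by
        have : (0:ℝ) < ((B:ℝ)+1)⁻¹ := by positivity
        linarith

lemma prod_inv_le_exp (S : Finset ℕ) (hS : ∀ p ∈ S, p.Prime) :
    ∏ p ∈ S, (1 - 1/(p:ℝ))⁻¹ ≤ Real.exp (1 + ∑ p ∈ S, (1/(p:ℝ))) := by
  have hterm : ∀ p ∈ S, (1 - 1/(p:ℝ))⁻¹ ≤ Real.exp (1/(p:ℝ) + ((p:ℝ)*((p:ℝ)-1))⁻¹) := by
    intro p hp
    have hp2 : (2:ℝ) ≤ (p:ℝ) := by exact_mod_cast (hS p hp).two_le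
    have hp0 : (0:ℝ) < p := by linarith
    have hp1 : (0:ℝ) < (p:ℝ) - 1 := by linarith
    have hval : (1 - 1/(p:ℝ))⁻¹ = 1 + ((p:ℝ)-1)⁻¹ := by
      field_simp
      ring
    have hsplit : ((p:ℝ)-1)⁻¹ = 1/(p:ℝ) + ((p:ℝ)*((p:ℝ)-1))⁻¹ := by
      field_simp
      try ring
    rw [hval, hsplit]
    have := Real.add_one_le_exp (1/(p:ℝ) + ((p:ℝ)*((p:ℝ)-1))⁻¹)
    linarith
  calc ∏ p ∈ S, (1 - 1/(p:ℝ))⁻¹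
      ≤ ∏ p ∈ S, Real.exp (1/(p:ℝ) + ((p:ℝ)*((p:ℝ)-1))⁻¹) := by
        apply Finset.prod_le_prod
        · intro p hp
          have hp2 : (2:ℝ) ≤ (p:ℝ) := by exact_mod_cast (hS p hp).two_le
          have hp1 : (1:ℝ) < (p:ℝ) := by linarith
          have hlt : 1/(p:ℝ) < 1 := by
            rw [div_lt_one (by linarith)]; exact hp1
          have h0 : (0:ℝ) < 1 - 1/(p:ℝ) := by linarith
          positivity
        · exact hterm
    _ = Real.exp (∑ p ∈ S, (1/(p:ℝ) + ((p:ℝ)*((p:ℝ)-1))⁻¹)) := by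
        rw [Real.exp_sum]
    _ ≤ Real.exp (1 + ∑ p ∈ S, (1/(p:ℝ))) := by
        apply Real.exp_le_exp.2
        rw [Finset.sum_add_distrib]
        have := sum_inv_mul_pred_le S (fun p hp => (hS p hp).two_le)
        linarith

/-- The sum of reciprocals of `Y`-smooth numbers up to `M` is at most `C log Y`. -/
lemma smooth_sum_log (M Y : ℕ) (hY : 2 ≤ Y) :
    ∑ m ∈ (Icc 1 M).filter (fun m => m.primeFactors ⊆ Nat.primesBelow (Y+1)), (1/(m:ℝ))
      ≤ (Real.exp 9 / Real.log 2) * Real.log Y := by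
  have hlog2 : (0:ℝ) < Real.log 2 := Real.log_pos (by norm_num)
  have hlogY : (0:ℝ) < Real.log Y := Real.log_pos (by exact_mod_cast hY)
  have h1 := smooth_sum_le M (Nat.primesBelow (Y+1))
    (fun p hp => Nat.prime_of_mem_primesBelow hp)
  have h2 := prod_inv_le_exp (Nat.primesBelow (Y+1))
    (fun p hp => Nat.prime_of_mem_primesBelow hp)
  have h3 := mertens2 Y hY
  calc ∑ m ∈ (Icc 1 M).filter (fun m => m.primeFactors ⊆ Nat.primesBelow (Y+1)), (1/(m:ℝ))
      ≤ Real.exp (1 + ∑ p ∈ Nat.primesBelow (Y+1), (1/(p:ℝ))) := h1.trans h2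
    _ ≤ Real.exp (1 + (Real.log (Real.log Y / Real.log 2) + 8)) := by
        apply Real.exp_le_exp.2
        linarith
    _ = Real.exp 9 * (Real.log Y / Real.log 2) := by
        rw [show (1 + (Real.log (Real.log Y / Real.log 2) + 8))
            = 9 + Real.log (Real.log Y / Real.log 2) by ring]
        rw [Real.exp_add, Real.exp_log (by positivity)]
    _ = (Real.exp 9 / Real.log 2) * Real.log Y := by ring

lemma P_prime_dvd {n : ℕ} (h : 2 ≤ P n) : (P n).Prime ∧ P n ∣ n := by
  have hsup : 2 ≤ n.primeFactors.sup id := by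
    by_contra hc
    push_neg at hc
    have : P n ≤ 1 := by
      unfold P
      omega
    omega
  have hne : n.primeFactors.Nonempty := by
    by_contra hc
    rw [Finset.not_nonempty_iff_eq_empty] at hc
    rw [hc] at hsup
    simp at hsup
  obtain ⟨p, hp, hps⟩ := Finset.exists_mem_eq_sup n.primeFactors hne id
  have hPn : P n = p := by
    rw [hps] at hsup
    unfold P
    rw [hps]
    simp only [id_eq] at hsup ⊢
    omega
  rw [hPn]
  exact ⟨Nat.prime_of_mem_primeFactors hp, Nat.dvd_of_mem_primeFactors hp⟩

lemma le_P_of_mem {m q : ℕ} (hq : q ∈ m.primeFactors) : q ≤ P m :=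
  le_trans (Finset.le_sup (f := id) hq) (le_max_right 1 _)

lemma one_le_log1 (t : ℝ) : 1 ≤ log1 t := le_max_left 1 _

lemma log1_le_self {t : ℝ} (ht : 1 ≤ t) : log1 t ≤ t := by
  unfold log1
  rw [max_le_iff]
  constructor
  · exact ht
  · have := Real.log_le_sub_one_of_pos (by linarith : (0:ℝ) < t)
    linarith

/-- the number of `n ≤ x` with `P(n) > x^{1/log₄ x}` and
`P₂(n) ≤ x^{1/log₃ x}` is `≪ x log₄ x / log₃ x`. -/
theorem stmt17 : ∃ C > (0 : ℝ), ∃ x₀ : ℝ, ∀ x ≥ x₀,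
    (((Finset.Icc 1 ⌊x⌋₊).filter fun n =>
        x ^ (1 / log4 x) < (P n : ℝ) ∧ (P2 n : ℝ) ≤ x ^ (1 / log3 x)).card : ℝ) ≤
      C * (x * log4 x / log3 x) := by
  have hlog4pos : (0:ℝ) < Real.log 4 := Real.log_pos (by norm_num)
  have hlog2pos : (0:ℝ) < Real.log 2 := Real.log_pos (by norm_num)
  set c1 : ℝ := 2 * Real.log 4 + 4 with hc1def
  set c6 : ℝ := Real.exp 9 / Real.log 2 with hc6def
  have hc1 : 0 < c1 := by positivity
  have hc6 : 0 < c6 := by positivity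
  refine ⟨c1 * c6, by positivity, Real.exp 64, ?_⟩
  intro x hx
  -- basic facts about x
  have hxpos : (0:ℝ) < x := lt_of_lt_of_le (Real.exp_pos 64) hx
  have hu64 : (64:ℝ) ≤ Real.log x := by
    calc (64:ℝ) = Real.log (Real.exp 64) := (Real.log_exp 64).symm
      _ ≤ Real.log x := Real.log_le_log (Real.exp_pos 64) hx
  set u := Real.log x with hu
  have hupos : (0:ℝ) < u := by linarith
  have hx1 : (1:ℝ) ≤ x := by
    calc (1:ℝ) ≤ Real.exp 64 := by
          have := Real.add_one_le_exp (64:ℝ)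
          linarith
      _ ≤ x := hx
  -- iterated log chain
  have hlog1x : log1 x = u := max_eq_right (by linarith)
  have hlog2x : log2 x = log1 u := by rw [log2, hlog1x]
  have h1le2 : (1:ℝ) ≤ log2 x := one_le_log1 _
  have h1le3 : (1:ℝ) ≤ log3 x := one_le_log1 _
  have h1le4 : (1:ℝ) ≤ log4 x := one_le_log1 _
  have h3le2 : log3 x ≤ log2 x := by
    rw [log3]
    exact log1_le_self h1le2
  have h4le3 : log4 x ≤ log3 x := by
    rw [log4]
    exact log1_le_self h1le3
  have h4le2 : log4 x ≤ log2 x := h4le3.trans h3le2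
  -- log2 x ≤ 2 sqrt u and 4 log2 x ≤ u
  have hsqrtu : (8:ℝ) ≤ Real.sqrt u := by
    have h64 : Real.sqrt 64 ≤ Real.sqrt u := Real.sqrt_le_sqrt hu64
    rw [show (64:ℝ) = 8^2 by norm_num, Real.sqrt_sq (by norm_num : (0:ℝ) ≤ 8)] at h64
    exact h64
  have hsqu : Real.sqrt u * Real.sqrt u = u := Real.mul_self_sqrt hupos.le
  have hlog2u : log2 x ≤ 2 * Real.sqrt u := by
    rw [hlog2x]
    unfold log1
    rw [max_le_iff]
    constructor
    · linarith
    · have h := Real.log_le_sub_one_of_pos (x := Real.sqrt u) (by linarith)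
      rw [Real.log_sqrt hupos.le] at h
      linarith
  have h4log2 : 4 * log2 x ≤ u := by
    nlinarith
  -- z and y
  set z := x ^ (1 / log4 x) with hzdef
  set y := x ^ (1 / log3 x) with hydef
  have hzpos : (0:ℝ) < z := Real.rpow_pos_of_pos hxpos _
  have hypos : (0:ℝ) < y := Real.rpow_pos_of_pos hxpos _
  have hlogz : Real.log z = u / log4 x := by
    rw [hzdef, Real.log_rpow hxpos]
    ring
  have hlogy : Real.log y = u / log3 x := by
    rw [hydef, Real.log_rpow hxpos]
    ring
  have hlogz4 : (4:ℝ) ≤ Real.log z := by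
    rw [hlogz]
    rw [le_div_iff₀ (by linarith : (0:ℝ) < log4 x)]
    calc 4 * log4 x ≤ 4 * log2 x := by linarith
      _ ≤ u := h4log2
  have hlogy4 : (4:ℝ) ≤ Real.log y := by
    rw [hlogy]
    rw [le_div_iff₀ (by linarith : (0:ℝ) < log3 x)]
    calc 4 * log3 x ≤ 4 * log2 x := by linarith
      _ ≤ u := h4log2
  have hz5 : (5:ℝ) ≤ z := by
    have h1 : Real.exp 4 ≤ Real.exp (Real.log z) := Real.exp_le_exp.2 hlogz4
    rw [Real.exp_log hzpos] at h1
    have := Real.add_one_le_exp (4:ℝ)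
    linarith
  have hy5 : (5:ℝ) ≤ y := by
    have h1 : Real.exp 4 ≤ Real.exp (Real.log y) := Real.exp_le_exp.2 hlogy4
    rw [Real.exp_log hypos] at h1
    have := Real.add_one_le_exp (4:ℝ)
    linarith
  set Nx := ⌊x⌋₊ with hNx
  set Z := ⌊z⌋₊ with hZ
  set Y := ⌊y⌋₊ with hY
  have hY5 : 5 ≤ Y := Nat.le_floor (by exact_mod_cast hy5)
  have hZ5 : 5 ≤ Z := Nat.le_floor (by exact_mod_cast hz5)
  have hY2 : 2 ≤ Y := by omega
  set Msm := (Icc 1 Nx).filter (fun m => m.primeFactors ⊆ Nat.primesBelow (Y+1)) with hMsm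
  set A := (Finset.Icc 1 Nx).filter (fun n =>
      x ^ (1 / log4 x) < (P n : ℝ) ∧ (P2 n : ℝ) ≤ x ^ (1 / log3 x)) with hA
  -- step A : A ⊆ biUnion
  have hsubset : A ⊆ Msm.biUnion (fun m => ((Ioc Z (Nx / m)).filter Nat.Prime).image (· * m)) := by
    intro n hn
    rw [hA, Finset.mem_filter, Finset.mem_Icc] at hn
    obtain ⟨⟨hn1, hnNx⟩, hPz, hP2y⟩ := hn
    have hzPn : z < (P n : ℝ) := hPz
    have hP2 : 2 ≤ P n := by
      have : (2:ℝ) ≤ (P n : ℝ) := by linarith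
      exact_mod_cast this
    obtain ⟨hPprime, hPdvd⟩ := P_prime_dvd hP2
    have hn0 : n ≠ 0 := by omega
    set p := P n with hp
    set m := n / p with hm
    have hppos : 0 < p := by omega
    have hnm : p * m = n := Nat.mul_div_cancel' hPdvd
    have hm1 : 1 ≤ m := by
      rcases Nat.eq_zero_or_pos m with h0 | h
      · rw [h0, Nat.mul_zero] at hnm
        omega
      · exact h
    have hmNx : m ≤ Nx := le_trans (Nat.div_le_self n p) hnNx
    have hmM : m ∈ Msm := by
      rw [hMsm, Finset.mem_filter, Finset.mem_Icc]
      refine ⟨⟨hm1, hmNx⟩, ?_⟩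
      intro r hr
      have hr' := Nat.prime_of_mem_primeFactors hr
      have hrP : r ≤ P m := le_P_of_mem hr
      have hPmP2 : P m = P2 n := rfl
      have hrY : r ≤ Y := by
        apply Nat.le_floor
        calc (r:ℝ) ≤ (P m : ℝ) := by exact_mod_cast hrP
          _ = (P2 n : ℝ) := by rw [hPmP2]
          _ ≤ y := hP2y
      rw [Nat.mem_primesBelow]
      exact ⟨by omega, hr'⟩
    rw [Finset.mem_biUnion]
    refine ⟨m, hmM, ?_⟩
    rw [Finset.mem_image]
    refine ⟨p, ?_, hnm⟩
    rw [Finset.mem_filter, Finset.mem_Ioc]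
    refine ⟨⟨?_, ?_⟩, hPprime⟩
    · rw [hZ]
      rw [Nat.floor_lt hzpos.le]
      exact hzPn
    · rw [Nat.le_div_iff_mul_le hm1]
      rw [hnm]
      exact hnNx
  -- step B : card bound in ℕ
  have hcard : A.card ≤ ∑ m ∈ Msm, ((Ioc Z (Nx / m)).filter Nat.Prime).card := by
    calc A.card ≤ (Msm.biUnion (fun m => ((Ioc Z (Nx / m)).filter Nat.Prime).image (· * m))).card :=
          Finset.card_le_card hsubset
      _ ≤ ∑ m ∈ Msm, (((Ioc Z (Nx / m)).filter Nat.Prime).image (· * m)).card :=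
          Finset.card_biUnion_le
      _ ≤ ∑ m ∈ Msm, ((Ioc Z (Nx / m)).filter Nat.Prime).card :=
          Finset.sum_le_sum fun m _ => Finset.card_image_le
  -- step C : per-m bound
  have hperm : ∀ m ∈ Msm, (((Ioc Z (Nx / m)).filter Nat.Prime).card : ℝ)
      ≤ (c1 * x * (log4 x / u)) * (1/(m:ℝ)) := by
    intro m hm
    rw [hMsm, Finset.mem_filter, Finset.mem_Icc] at hm
    have hm1 : 1 ≤ m := hm.1.1
    have hmpos : (0:ℝ) < m := by exact_mod_cast hm1
    rcases le_or_gt (Nx / m) Z with hle | hgt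
    · rw [Finset.Ioc_eq_empty (by omega)]
      simp only [Finset.filter_empty, Finset.card_empty, Nat.cast_zero]
      have h4pos : (0:ℝ) < log4 x := by linarith
      positivity
    · set t := Nx / m with ht
      have h2t : 2 ≤ t := by omega
      have hzt : z < (t:ℝ) := by
        have h1 : z < (Z:ℝ) + 1 := Nat.lt_floor_add_one z
        have h2 : Z + 1 ≤ t := hgt
        have : ((Z:ℝ) + 1) ≤ (t:ℝ) := by exact_mod_cast h2
        linarith
      have hlogzt : Real.log z ≤ Real.log t := Real.log_le_log hzpos hzt.le
      have hlogtpos : (0:ℝ) < Real.log z := by linarith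
      have hsub2 : (Ioc Z t).filter Nat.Prime ⊆ Nat.primesBelow (t+1) := by
        intro q hq
        rw [Finset.mem_filter, Finset.mem_Ioc] at hq
        rw [Nat.mem_primesBelow]
        exact ⟨by omega, hq.2⟩
      have htx : (t:ℝ) ≤ x / m := by
        rw [le_div_iff₀ hmpos]
        have h1 : t * m ≤ Nx := Nat.div_mul_le_self Nx m
        have h2 : ((t * m : ℕ) : ℝ) ≤ (Nx : ℝ) := by exact_mod_cast h1
        have h3 : (Nx : ℝ) ≤ x := Nat.floor_le hxpos.le
        push_cast at h2
        linarith
      calc (((Ioc Z t).filter Nat.Prime).card : ℝ)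
          ≤ ((Nat.primesBelow (t+1)).card : ℝ) := by
            exact_mod_cast Finset.card_le_card hsub2
        _ ≤ c1 * t / Real.log t := pi_le t h2t
        _ ≤ c1 * (x/m) / Real.log z := by
            apply div_le_div₀ (by positivity) ?_ hlogtpos hlogzt
            have : (0:ℝ) ≤ c1 := hc1.le
            apply mul_le_mul_of_nonneg_left htx this
        _ = (c1 * x * (log4 x / u)) * (1/(m:ℝ)) := by
            rw [hlogz]
            have h4 : log4 x ≠ 0 := by linarith
            field_simp
  -- step D : summation
  have hsum : (A.card : ℝ) ≤ (c1 * x * (log4 x / u)) * ∑ m ∈ Msm, (1/(m:ℝ)) := by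
    calc (A.card : ℝ) ≤ ((∑ m ∈ Msm, ((Ioc Z (Nx / m)).filter Nat.Prime).card : ℕ) : ℝ) := by
          exact_mod_cast hcard
      _ = ∑ m ∈ Msm, (((Ioc Z (Nx / m)).filter Nat.Prime).card : ℝ) := by push_cast; rfl
      _ ≤ ∑ m ∈ Msm, (c1 * x * (log4 x / u)) * (1/(m:ℝ)) := Finset.sum_le_sum hperm
      _ = (c1 * x * (log4 x / u)) * ∑ m ∈ Msm, (1/(m:ℝ)) := by rw [Finset.mul_sum]
  have hsmooth := smooth_sum_log Nx Y hY2
  have hlogY : Real.log Y ≤ u / log3 x := by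
    rw [← hlogy]
    rcases Nat.eq_zero_or_pos Y with h0 | hYpos
    · omega
    · apply Real.log_le_log (by exact_mod_cast hYpos)
      exact Nat.floor_le hypos.le
  have hlogYpos : (0:ℝ) ≤ Real.log Y := Real.log_natCast_nonneg Y
  have hfac : (0:ℝ) ≤ c1 * x * (log4 x / u) := by
    have h4pos : (0:ℝ) < log4 x := by linarith
    positivity
  calc (A.card : ℝ)
      ≤ (c1 * x * (log4 x / u)) * ∑ m ∈ Msm, (1/(m:ℝ)) := hsum
    _ ≤ (c1 * x * (log4 x / u)) * (c6 * Real.log Y) := by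
        apply mul_le_mul_of_nonneg_left (by rw [hc6def]; exact hsmooth) hfac
    _ ≤ (c1 * x * (log4 x / u)) * (c6 * (u / log3 x)) := by
        apply mul_le_mul_of_nonneg_left ?_ hfac
        exact mul_le_mul_of_nonneg_left hlogY hc6.le
    _ = (c1 * c6) * (x * log4 x / log3 x) := by
        have h3 : log3 x ≠ 0 := by linarith
        field_simp
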